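/- Let 0 < μ < 2/5 and let n ≥ 1 be an integer with n ≡ 1 (mod 4). Then G_n > (1/n²)·[1 − ((μπ/2)⁶ + 3(μπ/2)²) / (2·(1 − (μπ/2)⁴)²)]. -/

import Mathlib

set_option maxHeartbeats 1000000


open Real MeasureTheory

/-- The hyper-geometric integral `G_n = ∫₀^{π/2} t sin(nt)/√(1+(μt)²) dt`. -/
noncomputable def G (μ : ℝ) (n : ℕ) : ℝ :=
  ∫ t in (0:ℝ)..(π / 2), t * Real.sin ((n : ℝ) * t) / Real.sqrt (1 + (μ * t) ^ 2)

namespace GLB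

noncomputable def S (μ t : ℝ) : ℝ := Real.sqrt (1 + (μ*t)^2)

lemma q_pos (μ t : ℝ) : 0 < 1 + (μ*t)^2 := by positivity
lemma s_pos (μ t : ℝ) : 0 < S μ t := Real.sqrt_pos.2 (q_pos μ t)
lemma s_sq (μ t : ℝ) : (S μ t)^2 = 1+(μ*t)^2 := Real.sq_sqrt (q_pos μ t).le
lemma s_ne (μ t : ℝ) : S μ t ≠ 0 := ne_of_gt (s_pos μ t)
lemma spow_ne (μ t : ℝ) (k : ℕ) : (S μ t)^k ≠ 0 := pow_ne_zero _ (s_ne μ t)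

lemma contS (μ : ℝ) : Continuous (S μ) := by
  apply Real.continuous_sqrt.comp
  continuity

noncomputable def P0 (μ t : ℝ) : ℝ := t * (S μ t)⁻¹
noncomputable def P1 (μ t : ℝ) : ℝ := (S μ t)⁻¹ - μ^2*t^2 * ((S μ t)^3)⁻¹
noncomputable def P2 (μ t : ℝ) : ℝ := -(3*μ^2*t) * ((S μ t)^3)⁻¹ + 3*μ^4*t^3 * ((S μ t)^5)⁻¹
noncomputable def P3 (μ t : ℝ) : ℝ :=
  -(3*μ^2) * ((S μ t)^3)⁻¹ + 18*μ^4*t^2 * ((S μ t)^5)⁻¹ - 15*μ^6*t^4 * ((S μ t)^7)⁻¹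
noncomputable def P4 (μ t : ℝ) : ℝ :=
  45*μ^4*t * ((S μ t)^5)⁻¹ - 150*μ^6*t^3 * ((S μ t)^7)⁻¹ + 105*μ^8*t^5 * ((S μ t)^9)⁻¹

lemma hasDerivAt_q (μ t : ℝ) : HasDerivAt (fun t : ℝ => 1+(μ*t)^2) (2*μ^2*t) t := by
  have h := (((hasDerivAt_id t).const_mul μ).pow 2).const_add 1
  convert h using 1
  · rfl
  · rfl
  simp; simp only [id_eq]; ring

lemma hasDerivAt_S (μ t : ℝ) :
    HasDerivAt (S μ) (μ^2*t / S μ t) t := by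
  have h := (hasDerivAt_q μ t).sqrt (ne_of_gt (q_pos μ t))
  convert h using 1
  · rfl
  unfold S
  field_simp

lemma hasDerivAt_Spow (μ t : ℝ) (k : ℕ) :
    HasDerivAt (fun t => ((S μ t)^(k+1))⁻¹) (-((k+1:ℝ)*μ^2*t) * ((S μ t)^(k+3))⁻¹) t := by
  have h := ((hasDerivAt_S μ t).pow (k+1)).inv (spow_ne μ t (k+1))
  convert h using 1
  · rfl
  · rfl
  · rfl
  have hne := s_ne μ t
  have hX := pow_ne_zero k hne
  simp only [Pi.pow_apply, Nat.add_sub_cancel, Nat.cast_add, Nat.cast_one, pow_add]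
  field_simp

lemma hasDerivAt_P0 (μ t : ℝ) : HasDerivAt (fun t => P0 μ t) (P1 μ t) t := by
  have h := (hasDerivAt_id t).mul (hasDerivAt_Spow μ t 0)
  have hne := s_ne μ t
  convert h using 1
  · rfl
  · rfl
  all_goals first
    | (unfold P1; simp only [id]; field_simp; ring)
    | (funext x; simp [P0]; try ring)

lemma hasDerivAt_P1 (μ t : ℝ) : HasDerivAt (fun t => P1 μ t) (P2 μ t) t := by
  have h1 := hasDerivAt_Spow μ t 0
  have h2 := (((hasDerivAt_id t).pow 2).const_mul (μ^2)).mul (hasDerivAt_Spow μ t 2)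
  have h := h1.sub h2
  have hne := s_ne μ t
  convert h using 1
  · rfl
  · rfl
  all_goals first
    | (unfold P2; simp only [id, Pi.pow_apply]; field_simp; ring)
    | (funext x; simp [P1]; try ring)

lemma hasDerivAt_P2 (μ t : ℝ) : HasDerivAt (fun t => P2 μ t) (P3 μ t) t := by
  have h1 := ((hasDerivAt_id t).const_mul (-(3*μ^2))).mul (hasDerivAt_Spow μ t 2)
  have h2 := (((hasDerivAt_id t).pow 3).const_mul (3*μ^4)).mul (hasDerivAt_Spow μ t 4)
  have h := h1.add h2
  have hne := s_ne μ t
  convert h using 1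
  · rfl
  · rfl
  all_goals first
    | (unfold P3; simp only [id, Pi.pow_apply]; field_simp; ring)
    | (funext x; simp [P2]; try ring)

lemma hasDerivAt_P3 (μ t : ℝ) : HasDerivAt (fun t => P3 μ t) (P4 μ t) t := by
  have h1 := (hasDerivAt_Spow μ t 2).const_mul (-(3*μ^2))
  have h2 := (((hasDerivAt_id t).pow 2).const_mul (18*μ^4)).mul (hasDerivAt_Spow μ t 4)
  have h3 := (((hasDerivAt_id t).pow 4).const_mul (15*μ^6)).mul (hasDerivAt_Spow μ t 6)
  have h := (h1.add h2).sub h3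
  have hne := s_ne μ t
  convert h using 1
  · rfl
  · rfl
  all_goals first
    | (unfold P4; simp only [id, Pi.pow_apply]; field_simp; ring)
    | (funext x; simp [P3]; try ring)



noncomputable def F (c μ t : ℝ) : ℝ :=
  -(P0 μ t) * Real.cos (c*t) * c⁻¹ + P1 μ t * Real.sin (c*t) * (c^2)⁻¹
    + P2 μ t * Real.cos (c*t) * (c^3)⁻¹ - P3 μ t * Real.sin (c*t) * (c^4)⁻¹

lemma hasDerivAt_F (c μ : ℝ) (hc : c ≠ 0) (t : ℝ) :
    HasDerivAt (F c μ)
      (P0 μ t * Real.sin (c*t) - P4 μ t * Real.sin (c*t) * (c^4)⁻¹) t := by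
  have hct : HasDerivAt (fun t : ℝ => c*t) c t := by
    simpa using (hasDerivAt_id t).const_mul c
  have hcos := hct.cos
  have hsin := hct.sin
  have h := ((((((hasDerivAt_P0 μ t).mul hcos).mul_const c⁻¹).neg.add
      (((hasDerivAt_P1 μ t).mul hsin).mul_const (c^2)⁻¹)).add
      (((hasDerivAt_P2 μ t).mul hcos).mul_const (c^3)⁻¹)).sub
      (((hasDerivAt_P3 μ t).mul hsin).mul_const (c^4)⁻¹))
  convert h using 1
  · rfl
  · rfl
  · funext x; simp only [F, Pi.add_apply, Pi.sub_apply, Pi.neg_apply, Pi.mul_apply]; ring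
  · field_simp
    ring

lemma contSpowinv (μ : ℝ) (k : ℕ) : Continuous fun t => ((S μ t)^k)⁻¹ :=
  ((contS μ).pow k).inv₀ (fun t => spow_ne μ t k)

lemma contP0 (μ : ℝ) : Continuous fun t => P0 μ t :=
  continuous_id.mul ((contS μ).inv₀ (s_ne μ))

lemma contP4 (μ : ℝ) : Continuous fun t => P4 μ t := by
  unfold P4
  exact (((continuous_const.mul continuous_id).mul (contSpowinv μ 5)).sub
    ((continuous_const.mul (continuous_id.pow 3)).mul (contSpowinv μ 7))).add
    ((continuous_const.mul (continuous_id.pow 5)).mul (contSpowinv μ 9))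

lemma contsin (c : ℝ) : Continuous fun t : ℝ => Real.sin (c*t) :=
  Real.continuous_sin.comp (continuous_const.mul continuous_id)

lemma key (μ : ℝ) (n : ℕ) (hn : 1 ≤ n)
    (hcos : Real.cos ((n:ℝ)*(π/2)) = 0) (hsin : Real.sin ((n:ℝ)*(π/2)) = 1) :
    G μ n = P1 μ (π/2) * ((n:ℝ)^2)⁻¹ - P3 μ (π/2) * ((n:ℝ)^4)⁻¹
          + (∫ t in (0:ℝ)..(π/2), P4 μ t * Real.sin ((n:ℝ)*t)) * ((n:ℝ)^4)⁻¹ := by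
  have hc : (n:ℝ) ≠ 0 := Nat.cast_ne_zero.2 (by omega)
  have hint4 : IntervalIntegrable (fun t => P4 μ t * Real.sin ((n:ℝ)*t)) volume 0 (π/2) :=
    ((contP4 μ).mul (contsin _)).intervalIntegrable _ _
  have hint0 : IntervalIntegrable (fun t => P0 μ t * Real.sin ((n:ℝ)*t)) volume 0 (π/2) :=
    ((contP0 μ).mul (contsin _)).intervalIntegrable _ _
  have h1 : ∫ t in (0:ℝ)..(π/2),
      (P0 μ t * Real.sin ((n:ℝ)*t) - P4 μ t * Real.sin ((n:ℝ)*t) * ((n:ℝ)^4)⁻¹)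
      = F (n:ℝ) μ (π/2) - F (n:ℝ) μ 0 := by
    apply intervalIntegral.integral_eq_sub_of_hasDerivAt
      (fun t _ => hasDerivAt_F (n:ℝ) μ hc t)
    exact hint0.sub (hint4.mul_const _)
  have h2 : ∫ t in (0:ℝ)..(π/2),
      (P0 μ t * Real.sin ((n:ℝ)*t) - P4 μ t * Real.sin ((n:ℝ)*t) * ((n:ℝ)^4)⁻¹)
      = (∫ t in (0:ℝ)..(π/2), P0 μ t * Real.sin ((n:ℝ)*t))
        - (∫ t in (0:ℝ)..(π/2), P4 μ t * Real.sin ((n:ℝ)*t)) * ((n:ℝ)^4)⁻¹ := by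
    rw [intervalIntegral.integral_sub hint0 (hint4.mul_const _),
      intervalIntegral.integral_mul_const]
  have h3 : G μ n = ∫ t in (0:ℝ)..(π/2), P0 μ t * Real.sin ((n:ℝ)*t) := by
    unfold G
    apply intervalIntegral.integral_congr
    intro x _
    unfold P0 S
    simp only []
    rw [div_eq_mul_inv]; ring
  have hF0 : F (n:ℝ) μ 0 = 0 := by
    simp [F, P0, P1, P2, P3, mul_zero, Real.sin_zero, Real.cos_zero]
  have hFpi : F (n:ℝ) μ (π/2) = P1 μ (π/2) * ((n:ℝ)^2)⁻¹ - P3 μ (π/2) * ((n:ℝ)^4)⁻¹ := by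
    rw [F, hcos, hsin]; ring
  rw [h3]
  have := h1.symm.trans h2
  rw [hF0, hFpi] at h1
  rw [h2] at h1
  linarith [h1]

lemma trig (n : ℕ) (hn4 : n % 4 = 1) :
    Real.cos ((n:ℝ)*(π/2)) = 0 ∧ Real.sin ((n:ℝ)*(π/2)) = 1 := by
  obtain ⟨m, rfl⟩ : ∃ m, n = 4*m+1 := ⟨n/4, by omega⟩
  have h : ((4*m+1:ℕ):ℝ)*(π/2) = π/2 + m*(2*π) := by push_cast; ring
  rw [h, Real.cos_add_nat_mul_two_pi, Real.sin_add_nat_mul_two_pi,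
    Real.cos_pi_div_two, Real.sin_pi_div_two]
  exact ⟨rfl, rfl⟩

lemma intP4 (μ : ℝ) : ∫ t in (0:ℝ)..(π/2), P4 μ t = P3 μ (π/2) + 3*μ^2 := by
  have h := intervalIntegral.integral_eq_sub_of_hasDerivAt (f := fun t => P3 μ t)
    (f' := fun t => P4 μ t) (a := 0) (b := π/2) (fun t _ => hasDerivAt_P3 μ t)
    ((contP4 μ).intervalIntegrable _ _)
  rw [h]
  have h0 : P3 μ 0 = -(3*μ^2) := by simp [P3, S]
  rw [h0]; ring

lemma P4_eq (μ t : ℝ) : P4 μ t = (15*μ^4*t*(3-4*(μ*t)^2)) / (S μ t)^9 := by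
  have hs2 := s_sq μ t
  have hne := s_ne μ t
  unfold P4
  field_simp
  linear_combination (45*μ^4*t + 45*μ^4*t*(S μ t)^2 - 105*μ^6*t^3) * hs2

lemma P1_pi (μ : ℝ) : P1 μ (π/2) = ((S μ (π/2))^3)⁻¹ := by
  have hs2 := s_sq μ (π/2)
  have hne := s_ne μ (π/2)
  unfold P1
  field_simp
  linear_combination 4 * hs2

lemma P3_pi (μ : ℝ) : P3 μ (π/2) = 3*μ^2*(4*(μ*(π/2))^2 - 1) * ((S μ (π/2))^7)⁻¹ := by
  have hs2 := s_sq μ (π/2)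
  have hne := s_ne μ (π/2)
  unfold P3
  field_simp
  linear_combination (-48*μ^2 - 48*μ^2*(S μ (π/2))^2 + 60*μ^4*π^2) * hs2

lemma P4_nonneg (μ : ℝ) (hμ0 : 0 ≤ μ) (hμ : μ < 2/5) {t : ℝ}
    (ht0 : 0 ≤ t) (ht1 : t ≤ π/2) : 0 ≤ P4 μ t := by
  rw [P4_eq]
  apply div_nonneg _ (pow_nonneg (s_pos μ t).le 9)
  have hπ : π < 3.15 := by linarith [Real.pi_lt_d2]
  have hμt : μ*t ≤ (2/5)*(π/2) :=
    mul_le_mul hμ.le ht1 ht0 (by norm_num)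
  have h2 : 0 ≤ 3-4*(μ*t)^2 := by nlinarith [mul_nonneg hμ0 ht0]
  have h1 : 0 ≤ 15*μ^4*t := by positivity
  exact mul_nonneg h1 h2

lemma K1_nonneg (μ : ℝ) (hμ0 : 0 ≤ μ) (hμ : μ < 2/5) :
    0 ≤ ∫ t in (0:ℝ)..(π/2), P4 μ t * Real.sin ((1:ℝ)*t) := by
  apply intervalIntegral.integral_nonneg pi_div_two_pos.le
  intro u hu
  rw [one_mul]
  exact mul_nonneg (P4_nonneg μ hμ0 hμ hu.1 hu.2)
    (Real.sin_nonneg_of_nonneg_of_le_pi hu.1 (le_trans hu.2 (by linarith [Real.pi_pos])))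

lemma K_ge (μ : ℝ) (hμ0 : 0 ≤ μ) (hμ : μ < 2/5) (n : ℕ) :
    -(P3 μ (π/2) + 3*μ^2) ≤ ∫ t in (0:ℝ)..(π/2), P4 μ t * Real.sin ((n:ℝ)*t) := by
  have h := intervalIntegral.integral_mono_on (f := fun t => -(P4 μ t))
    (g := fun t => P4 μ t * Real.sin ((n:ℝ)*t)) (μ := volume) pi_div_two_pos.le
    ((contP4 μ).neg.intervalIntegrable _ _)
    (((contP4 μ).mul (contsin _)).intervalIntegrable _ _)
    (fun u hu => by
      have h4 := P4_nonneg μ hμ0 hμ hu.1 hu.2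
      have hs := Real.neg_one_le_sin ((n:ℝ)*u)
      nlinarith)
  rw [intervalIntegral.integral_neg, intP4] at h
  exact h

end GLB

section
variable {u s : ℝ}

lemma s_le (hu0 : 0 < u) (hs0 : 0 < s) (hs2 : s^2 = 1+u) : s ≤ 1+u/2 := by
  nlinarith [hs2, hs0, sq_nonneg u]

-- power bounds
lemma pb (hu0 : 0 < u) (hu1 : u ≤ 0.3948) :
    u^2 ≤ 0.3948*u ∧ u^3 ≤ 0.1559*u ∧ u^4 ≤ 0.0616*u ∧ u^5 ≤ 0.0244*u ∧
    u^6 ≤ 0.0097*u ∧ u^7 ≤ 0.0039*u ∧ u^8 ≤ 0.0016*u ∧ u^9 ≤ 0.0007*u := by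
  have c1 : u^2 ≤ 0.3948*u := by nlinarith
  have c2 : u^3 ≤ 0.1559*u := by nlinarith [mul_le_mul_of_nonneg_left c1 hu0.le]
  have c3 : u^4 ≤ 0.0616*u := by nlinarith [mul_le_mul_of_nonneg_left c2 hu0.le]
  have c4 : u^5 ≤ 0.0244*u := by nlinarith [mul_le_mul_of_nonneg_left c3 hu0.le]
  have c5 : u^6 ≤ 0.0097*u := by nlinarith [mul_le_mul_of_nonneg_left c4 hu0.le]
  have c6 : u^7 ≤ 0.0039*u := by nlinarith [mul_le_mul_of_nonneg_left c5 hu0.le]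
  have c7 : u^8 ≤ 0.0016*u := by nlinarith [mul_le_mul_of_nonneg_left c6 hu0.le]
  have c8 : u^9 ≤ 0.0007*u := by nlinarith [mul_le_mul_of_nonneg_left c7 hu0.le]
  exact ⟨c1,c2,c3,c4,c5,c6,c7,c8⟩

lemma core_ineq (hu0 : 0 < u) (hu1 : u ≤ 0.3948) (hs0 : 0 < s)
    (hs2 : s^2 = 1+u) :
    1 - (u^3+3*u)/(2*(1-u^2)^2) < (s^3)⁻¹ := by
  have hd : 0 < 1-u^2 := by nlinarith
  have hD : 0 < 2*(1-u^2)^2 := by positivity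
  have hs3 : 0 < s^3 := by positivity
  have hLHS : 1 - (u^3+3*u)/(2*(1-u^2)^2) = (2*(1-u^2)^2 - 3*u - u^3)/(2*(1-u^2)^2) := by
    field_simp; ring
  rw [hLHS, inv_eq_one_div, div_lt_div_iff₀ hD hs3, one_mul]
  set N := 2*(1-u^2)^2 - 3*u - u^3 with hN
  rcases le_or_gt N 0 with h | h
  · nlinarith [mul_nonpos_of_nonpos_of_nonneg h hs3.le]
  · obtain ⟨c1,c2,c3,c4,c5,c6,c7,c8⟩ := pb hu0 hu1
    have hR : 8 ≤ 15 + 33*u - 33*u^2 - 139*u^3 - 99*u^4 + 31*u^5 + 61*u^6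
        + 15*u^7 - 8*u^8 - 4*u^9 := by
      nlinarith [c1,c2,c3,c4,c5,c6,c7,c8, pow_nonneg hu0.le 5, pow_nonneg hu0.le 6,
        pow_nonneg hu0.le 7]
    have key : N^2*(1+u)^3 < (2*(1-u^2)^2)^2 := by
      have hid : (2*(1-u^2)^2)^2 - N^2*(1+u)^3
          = u^2*(15 + 33*u - 33*u^2 - 139*u^3 - 99*u^4 + 31*u^5 + 61*u^6
            + 15*u^7 - 8*u^8 - 4*u^9) := by rw [hN]; ring
      nlinarith [mul_pos (mul_pos hu0 hu0) (show (0:ℝ) < 15 + 33*u - 33*u^2 - 139*u^3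
        - 99*u^4 + 31*u^5 + 61*u^6 + 15*u^7 - 8*u^8 - 4*u^9 by linarith)]
    have hs6 : (s^3)^2 = (1+u)^3 := by rw [show (s^3)^2 = (s^2)^3 by ring, hs2]
    have h1 : (N*s^3)^2 < (2*(1-u^2)^2)^2 := by
      calc (N*s^3)^2 = N^2*(s^3)^2 := by ring
      _ = N^2*(1+u)^3 := by rw [hs6]
      _ < (2*(1-u^2)^2)^2 := key
    exact lt_of_pow_lt_pow_left₀ 2 hD.le h1

lemma L2_ineq (hu0 : 1/4 < u) (hu1 : u ≤ 0.3948) (hs0 : 0 < s) (hs2 : s^2 = 1+u) :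
    1 - (u^3+3*u)/(2*(1-u^2)^2) < (s^3)⁻¹ + (12/25)*(1-4*u)*(s^7)⁻¹ := by
  have hu0' : 0 < u := by linarith
  have hd : 0 < 1-u^2 := by nlinarith
  have hD : 0 < 2*(1-u^2)^2 := by positivity
  have hsle := s_le hu0' hs0 hs2
  have hs3 : s^3 = s*(1+u) := by
    rw [show s^3 = s*s^2 by ring, hs2]
  have hs7 : s^7 = s*(1+u)^3 := by
    rw [show s^7 = s*(s^2)^3 by ring, hs2]
  have hden : 0 < s*(1+u)^3 := by positivity
  have hC : (0:ℝ) < (1+u)^2 + (12/25)*(1-4*u) := by nlinarith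
  have hRHS : (s^3)⁻¹ + (12/25)*(1-4*u)*(s^7)⁻¹
      = ((1+u)^2 + (12/25)*(1-4*u)) / (s*(1+u)^3) := by
    rw [hs3, hs7]
    have h1 : s*(1+u) ≠ 0 := by positivity
    have h2 : s*(1+u)^3 ≠ 0 := by positivity
    field_simp
  have hLHS : 1 - (u^3+3*u)/(2*(1-u^2)^2) = (2*(1-u^2)^2 - 3*u - u^3)/(2*(1-u^2)^2) := by
    field_simp; ring
  rw [hLHS, hRHS, div_lt_div_iff₀ hD hden]
  set N := 2*(1-u^2)^2 - 3*u - u^3 with hN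
  rcases le_or_gt N 0 with h | h
  · have : N * (s*(1+u)^3) ≤ 0 := mul_nonpos_of_nonpos_of_nonneg h hden.le
    nlinarith [mul_pos hC hD]
  · have step : N * (s*(1+u)^3) ≤ N * ((1+u/2)*(1+u)^3) := by
      apply mul_le_mul_of_nonneg_left _ h.le
      apply mul_le_mul_of_nonneg_right hsle (by positivity)
    have poly : N * ((1+u/2)*(1+u)^3) < ((1+u)^2 + (12/25)*(1-4*u)) * (2*(1-u^2)^2) := by
      obtain ⟨c1,c2,c3,c4,c5,c6,c7,c8⟩ := pb hu0' hu1
      nlinarith [c1,c2,c3,c4,c5,c6,c7,c8, hu0, hu1,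
        mul_le_mul_of_nonneg_left hu0.le hu0'.le,
        mul_le_mul_of_nonneg_left (mul_le_mul_of_nonneg_left hu0.le hu0'.le) hu0'.le]
    linarith

lemma L3_ineq (hu0 : 0 < u) (hu1 : u ≤ 0.3948) (hs0 : 0 < s) (hs2 : s^2 = 1+u) :
    1 - (u^3+3*u)/(2*(1-u^2)^2) < (s^3)⁻¹ + (12/625)*(2*(1-4*u)*(s^7)⁻¹ - 1) := by
  have hd : 0 < 1-u^2 := by nlinarith
  have hD : 0 < 2*(1-u^2)^2 := by positivity
  have hsle := s_le hu0 hs0 hs2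
  have hs7 : s^7 = s*(1+u)^3 := by
    rw [show s^7 = s*(s^2)^3 by ring, hs2]
  have hs3 : s^3 = s*(1+u) := by
    rw [show s^3 = s*s^2 by ring, hs2]
  have hden : 0 < s*(1+u)^3 := by positivity
  have hC : (0:ℝ) < (1+u)^2 + (24/625)*(1-4*u) := by nlinarith
  have hRHS : (s^3)⁻¹ + (12/625)*(2*(1-4*u)*(s^7)⁻¹ - 1)
      = ((1+u)^2 + (24/625)*(1-4*u)) / (s*(1+u)^3) - 12/625 := by
    rw [hs3, hs7]
    have h1 : s*(1+u) ≠ 0 := by positivity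
    have h2 : s*(1+u)^3 ≠ 0 := by positivity
    field_simp
    ring
  rw [hRHS]
  rw [show (1 - (u^3+3*u)/(2*(1-u^2)^2) < ((1+u)^2 + (24/625)*(1-4*u)) / (s*(1+u)^3) - 12/625)
    ↔ ((1 - (u^3+3*u)/(2*(1-u^2)^2) + 12/625) < ((1+u)^2 + (24/625)*(1-4*u)) / (s*(1+u)^3))
    from by constructor <;> intro <;> linarith]
  have hLHS : 1 - (u^3+3*u)/(2*(1-u^2)^2) + 12/625
      = (2*(1-u^2)^2 - 3*u - u^3 + (12/625)*(2*(1-u^2)^2))/(2*(1-u^2)^2) := by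
    field_simp; ring
  rw [hLHS, div_lt_div_iff₀ hD hden]
  obtain ⟨c1,c2,c3,c4,c5,c6,c7,c8⟩ := pb hu0 hu1
  set N := 2*(1-u^2)^2 - 3*u - u^3 + (12/625)*(2*(1-u^2)^2) with hN
  have hNpos : 0 < N := by rw [hN]; nlinarith [c1, c2]
  have step : N * (s*(1+u)^3) ≤ N * ((1+u/2)*(1+u)^3) := by
    apply mul_le_mul_of_nonneg_left _ hNpos.le
    apply mul_le_mul_of_nonneg_right hsle (by positivity)
  have h4 : u^4 ≤ 0.0244 := by nlinarith [c3]
  have h5 : u^5 ≤ 0.0097 := by nlinarith [c4]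
  have h5' : u^6 ≤ 0.0039 := by nlinarith [c5]
  have h6 : u^6 ≤ 0.0244*u^2 := by nlinarith [mul_le_mul_of_nonneg_left h4 (sq_nonneg u)]
  have h7 : u^7 ≤ 0.0097*u^2 := by nlinarith [mul_le_mul_of_nonneg_left h5 (sq_nonneg u)]
  have h8 : u^8 ≤ 0.0039*u^2 := by nlinarith [mul_le_mul_of_nonneg_left h5' (sq_nonneg u)]
  have poly : N * ((1+u/2)*(1+u)^3) < ((1+u)^2 + (24/625)*(1-4*u)) * (2*(1-u^2)^2) := by
    have hid : ((1+u)^2 + (24/625)*(1-4*u)) * (2*(1-u^2)^2) - N * ((1+u/2)*(1+u)^3)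
        = 24/625 - (276/625)*u + (4063/1250)*u^2 + (20359/1250)*u^3 + (15228/625)*u^4
          + (7969/625)*u^5 - (3293/1250)*u^6 - (1149/250)*u^7 - (637/625)*u^8 := by
      rw [hN]; ring
    nlinarith [h6, h7, h8, pow_nonneg hu0.le 3, pow_nonneg hu0.le 4,
      pow_nonneg hu0.le 5, sq_nonneg (u-0.07), hu0, hu1, hid]
  linarith

end

/-- For `0 < μ < 2/5` and `n ≡ 1 (mod 4)`,
`G_n > (1/n²) [1 − ((μπ/2)⁶ + 3(μπ/2)²) / (2(1 − (μπ/2)⁴)²)]`. -/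
theorem G_lower_bound (μ : ℝ) (hμ0 : 0 < μ) (hμ : μ < 2 / 5) (n : ℕ) (hn : 1 ≤ n)
    (hn4 : n % 4 = 1) :
    (1 / (n : ℝ) ^ 2) *
        (1 - ((μ * π / 2) ^ 6 + 3 * (μ * π / 2) ^ 2) / (2 * (1 - (μ * π / 2) ^ 4) ^ 2))
      < G μ n := by
  obtain ⟨hcos, hsin⟩ := GLB.trig n hn4
  have hkey := GLB.key μ n hn hcos hsin
  have hπu : π < 3.1416 := Real.pi_lt_d4
  have hπl : 3.1415 < π := Real.pi_gt_d4
  have hs2 : (GLB.S μ (π/2))^2 = 1+(μ*(π/2))^2 := GLB.s_sq μ (π/2)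
  have hs0 : 0 < GLB.S μ (π/2) := GLB.s_pos μ (π/2)
  set s := GLB.S μ (π/2) with hsdef
  set u : ℝ := (μ*(π/2))^2 with hu
  have hu0 : 0 < u := by positivity
  have hu1 : u ≤ 0.3948 := by
    rw [hu]
    have hbp : 0 < μ*(π/2) := by positivity
    have hb : μ*(π/2) < 0.62832 := by nlinarith [Real.pi_pos]
    nlinarith [mul_lt_mul' hb.le hb hbp.le (by norm_num : (0:ℝ) < 0.62832)]
  have e2 : (μ * π / 2)^2 = u := by rw [hu]; ring
  have e4 : (μ * π / 2)^4 = u^2 := by rw [hu]; ring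
  have e6 : (μ * π / 2)^6 = u^3 := by rw [hu]; ring
  rw [e2, e4, e6]
  set K := ∫ t in (0:ℝ)..(π/2), GLB.P4 μ t * Real.sin ((n:ℝ)*t) with hK
  have hn0 : (0:ℝ) < (n:ℝ) := by exact_mod_cast Nat.pos_of_ne_zero (by omega)
  have hn2 : (0:ℝ) < (n:ℝ)^2 := by positivity
  have hP3v : GLB.P3 μ (π/2) = 3*μ^2*(4*u - 1) * (s^7)⁻¹ := by
    rw [GLB.P3_pi μ, hu]
  have hGeq : G μ n = ((s^3)⁻¹ + (K - GLB.P3 μ (π/2))*((n:ℝ)^2)⁻¹) * ((n:ℝ)^2)⁻¹ := by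
    rw [hkey, GLB.P1_pi μ]
    rw [← hsdef]
    have : ((n:ℝ)^2) ≠ 0 := ne_of_gt hn2
    field_simp
    ring
  have hμ2 : 3*μ^2 < 12/25 := by nlinarith
  have hs7 : (0:ℝ) < (s^7)⁻¹ := by positivity
  -- main bound
  have hM : 1 - (u^3 + 3*u)/(2*(1-u^2)^2)
      < (s^3)⁻¹ + (K - GLB.P3 μ (π/2))*((n:ℝ)^2)⁻¹ := by
    rcases eq_or_ne n 1 with rfl | hne1
    · have hK1 : 0 ≤ K := by
        have := GLB.K1_nonneg μ hμ0.le hμ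
        rw [hK]
        simpa using this
      have hinv1 : ((1:ℕ):ℝ)^2 = 1 := by norm_num
      rw [hinv1]
      rcases le_or_gt u (1/4) with hcase | hcase
      · have hP3le : GLB.P3 μ (π/2) ≤ 0 := by
          rw [hP3v]
          apply mul_nonpos_of_nonpos_of_nonneg _ hs7.le
          nlinarith
        have hXpos : 0 ≤ (K - GLB.P3 μ (π/2)) := by linarith
        have hcore := core_ineq hu0 hu1 hs0 hs2
        rw [inv_one, mul_one]
        linarith
      · have hL2 := L2_ineq hcase hu1 hs0 hs2
        have hstep : (12/25)*(1-4*u)*(s^7)⁻¹ ≤ 3*μ^2*(1-4*u)*(s^7)⁻¹ := by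
          apply mul_le_mul_of_nonneg_right _ hs7.le
          nlinarith
        rw [inv_one, mul_one]
        rw [hP3v]
        have : 3*μ^2*(1-4*u)*(s^7)⁻¹ = -(3*μ^2*(4*u-1)*(s^7)⁻¹) := by ring
        linarith
    · have hn5 : 5 ≤ n := by omega
      have hn5' : (5:ℝ) ≤ (n:ℝ) := by exact_mod_cast hn5
      have hKge : -(GLB.P3 μ (π/2) + 3*μ^2) ≤ K := GLB.K_ge μ hμ0.le hμ n
      have hXge : 3*μ^2*(2*(1-4*u)*(s^7)⁻¹ - 1) ≤ K - GLB.P3 μ (π/2) := by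
        rw [hP3v] at hKge ⊢
        nlinarith [hKge]
      have hinvle : ((n:ℝ)^2)⁻¹ ≤ 1/25 := by
        rw [inv_le_comm₀ hn2 (by norm_num)]
        nlinarith
      have hinvpos : 0 < ((n:ℝ)^2)⁻¹ := by positivity
      rcases le_or_gt 0 (2*(1-4*u)*(s^7)⁻¹ - 1) with hβ | hβ
      · have hXpos : 0 ≤ (K - GLB.P3 μ (π/2)) := by nlinarith
        have hcore := core_ineq hu0 hu1 hs0 hs2
        nlinarith [mul_nonneg hXpos hinvpos.le]
      · have hL3 := L3_ineq hu0 hu1 hs0 hs2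
        have h1 : 3*μ^2*(2*(1-4*u)*(s^7)⁻¹ - 1) * ((n:ℝ)^2)⁻¹
            ≤ (K - GLB.P3 μ (π/2)) * ((n:ℝ)^2)⁻¹ :=
          mul_le_mul_of_nonneg_right hXge hinvpos.le
        have h2 : (12/625)*(2*(1-4*u)*(s^7)⁻¹ - 1)
            ≤ 3*μ^2*(2*(1-4*u)*(s^7)⁻¹ - 1) * ((n:ℝ)^2)⁻¹ := by
          have hb : 3*μ^2*(2*(1-4*u)*(s^7)⁻¹ - 1) ≤ 0 :=
            mul_nonpos_of_nonneg_of_nonpos (by positivity) hβ.le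
          have hb2 : 3*μ^2*(2*(1-4*u)*(s^7)⁻¹ - 1) * ((n:ℝ)^2)⁻¹
              ≥ 3*μ^2*(2*(1-4*u)*(s^7)⁻¹ - 1) * (1/25) := by
            nlinarith [hb, hinvle, hinvpos]
          have hb3 : (12/625)*(2*(1-4*u)*(s^7)⁻¹ - 1)
              ≤ 3*μ^2*(2*(1-4*u)*(s^7)⁻¹ - 1) * (1/25) := by
            nlinarith [hβ, hμ2, hμ0]
          linarith
        linarith
  rw [hGeq]
  have hfin := mul_lt_mul_of_pos_right hM (show (0:ℝ) < ((n:ℝ)^2)⁻¹ by positivity)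
  calc 1/(n:ℝ)^2 * (1 - (u^3+3*u)/(2*(1-u^2)^2))
      = (1 - (u^3+3*u)/(2*(1-u^2)^2)) * ((n:ℝ)^2)⁻¹ := by rw [one_div]; ring
    _ < _ := hfin
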